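/- Let p be a prime, k a positive integer, and G a finite group such that G = N·P where N = O_{p'}(G) is the maximal normal p'-subgroup and P is a Sylow p-subgroup. Suppose N = ⟨g_1, ..., g_s⟩ and P = ⟨h_1, ..., h_t⟩. Then [N, P] is generated by the G-conjugates of the commutators [g_i, h_j, h_j, ..., h_j] (k copies of h_j) for 1 ≤ i ≤ s, 1 ≤ j ≤ t. -/

import Mathlib

open scoped commutatorElement
/-- The left-normed iterated commutator `[x, y, y, ..., y]` with `n` copies of `y`. -/
def engelComm {G : Type*} [Group G] (x y : G) : ℕ → G
  | 0 => x
  | n + 1 => ⁅engelComm x y n, y⁆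

lemma map_engelComm {G H : Type*} [Group G] [Group H] (f : G →* H) (x y : G) :
    ∀ n, f (engelComm x y n) = engelComm (f x) (f y) n
  | 0 => rfl
  | n + 1 => by
      simp only [engelComm, map_commutatorElement, map_engelComm f x y n]

/-- A commutator with a member of a normal subgroup on the left lies in the subgroup. -/
lemma comm_mem_normal {G : Type*} [Group G] {N : Subgroup G} (hN : N.Normal)
    {w : G} (hw : w ∈ N) (c : G) : ⁅w, c⁆ ∈ N := by
  have : ⁅w, c⁆ = w * (c * w⁻¹ * c⁻¹) := by rw [commutatorElement_def]; group
  rw [this]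
  exact N.mul_mem hw (hN.conj_mem _ (N.inv_mem hw) c)

/-- Key coprime lemma: if `h'` has `p`-power order, `y` lies in a normal `p'`-subgroup,
and `⁅⁅y, h'⁆, h'⁆ = 1`, then `⁅y, h'⁆ = 1`. -/
lemma double_comm_eq_one {Q : Type*} [Group Q] (p : ℕ) [Fact p.Prime]
    {N' : Subgroup Q} (hN' : N'.Normal) (hp' : ∀ z ∈ N', ¬ p ∣ orderOf z)
    {h' : Q} {a : ℕ} (hha : h' ^ p ^ a = 1)
    {y : Q} (hy : y ∈ N') (hcom : ⁅⁅y, h'⁆, h'⁆ = 1) : ⁅y, h'⁆ = 1 := by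
  set z := ⁅y, h'⁆ with hz_def
  have hz : z ∈ N' := comm_mem_normal hN' hy h'
  have hcz : Commute z h' := commutatorElement_eq_one_iff_commute.mp hcom
  have hconj : h' * y⁻¹ * h'⁻¹ = y⁻¹ * z := by
    rw [hz_def, commutatorElement_def]; group
  have key : ∀ m : ℕ, h' ^ m * y⁻¹ * (h' ^ m)⁻¹ = y⁻¹ * z ^ m := by
    intro m
    induction m with
    | zero => simp
    | succ m ih =>
        have hzm : h' * z ^ m * h'⁻¹ = z ^ m := by
          rw [(hcz.pow_left m).symm.eq]; group
        calc h' ^ (m + 1) * y⁻¹ * (h' ^ (m + 1))⁻¹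
            = h' * (h' ^ m * y⁻¹ * (h' ^ m)⁻¹) * h'⁻¹ := by rw [pow_succ']; group
          _ = h' * (y⁻¹ * z ^ m) * h'⁻¹ := by rw [ih]
          _ = (h' * y⁻¹ * h'⁻¹) * (h' * z ^ m * h'⁻¹) := by group
          _ = (y⁻¹ * z) * z ^ m := by rw [hconj, hzm]
          _ = y⁻¹ * z ^ (m + 1) := by rw [pow_succ']; group
  have hzp : z ^ p ^ a = 1 := by
    have h2 := key (p ^ a)
    rw [hha] at h2
    simp only [one_mul, inv_one, mul_one] at h2
    exact (mul_left_cancel (a := y⁻¹) (b := (1 : Q)) (by rw [mul_one]; exact h2)).symm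
  have hord : orderOf z ∣ p ^ a := orderOf_dvd_of_pow_eq_one hzp
  have hcop : (orderOf z).Coprime (p ^ a) :=
    (Nat.Coprime.pow_right a
      (((Nat.Prime.coprime_iff_not_dvd Fact.out).mpr (hp' z hz)).symm))
  have : orderOf z = 1 := hcop.eq_one_of_dvd hord
  exact orderOf_eq_one_iff.mp this

/-- Engel-to-single: iterated commutator trivial forces single commutator trivial. -/
lemma engel_to_single {Q : Type*} [Group Q] (p : ℕ) [Fact p.Prime]
    {N' : Subgroup Q} (hN' : N'.Normal) (hp' : ∀ z ∈ N', ¬ p ∣ orderOf z)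
    {h' : Q} {a : ℕ} (hha : h' ^ p ^ a = 1) :
    ∀ m : ℕ, ∀ y ∈ N', engelComm y h' (m + 1) = 1 → ⁅y, h'⁆ = 1 := by
  intro m
  induction m with
  | zero => intro y hy hE; exact hE
  | succ m ih =>
      intro y hy hE
      have hmem : engelComm y h' m ∈ N' := by
        clear hE ih
        induction m with
        | zero => exact hy
        | succ m ih2 => exact comm_mem_normal hN' ih2 h'
      have hE' : engelComm y h' (m + 1) = 1 := by
        have : ⁅⁅engelComm y h' m, h'⁆, h'⁆ = 1 := hE
        exact double_comm_eq_one p hN' hp' hha hmem this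
      exact ih y hy hE'

theorem stmt7 {G : Type*} [Group G] [Finite G] (p : ℕ) [Fact p.Prime] (k : ℕ) (hk : 0 < k)
    (N : Subgroup G) (hNnormal : N.Normal) (hNp' : ∀ g ∈ N, ¬ p ∣ orderOf g)
    (hNmax : ∀ M : Subgroup G, M.Normal → (∀ g ∈ M, ¬ p ∣ orderOf g) → M ≤ N)
    (P : Sylow p G) (hNP : N ⊔ (P : Subgroup G) = ⊤)
    (s t : ℕ) (g : Fin s → G) (h : Fin t → G)
    (hgN : ∀ i, g i ∈ N) (hggen : Subgroup.closure (Set.range g) = N)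
    (hhP : ∀ j, h j ∈ (P : Subgroup G)) (hhgen : Subgroup.closure (Set.range h) = (P : Subgroup G)) :
    ⁅N, (P : Subgroup G)⁆ =
      Subgroup.normalClosure {z : G | ∃ i j, z = engelComm (g i) (h j) k} := by
  set S : Set G := {z : G | ∃ i j, z = engelComm (g i) (h j) k} with hS_def
  -- engelComm of generators lies in N for all m
  have hengel_mem : ∀ (i : Fin s) (j : Fin t) (m : ℕ), engelComm (g i) (h j) m ∈ N := by
    intro i j m
    induction m with
    | zero => exact hgN i
    | succ m ih => exact comm_mem_normal hNnormal ih (h j)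
  -- ⁅N, P⁆ is normal in G
  have hComNormal : (⁅N, (P : Subgroup G)⁆).Normal := by
    rw [← Subgroup.normalizer_eq_top_iff]
    rw [eq_top_iff, ← hNP, sup_le_iff]
    constructor
    · intro n hn
      apply Subgroup.mem_normalizer_fintype
      intro x hx
      rw [Subgroup.commutator_def] at hx ⊢
      induction hx using Subgroup.closure_induction with
      | mem w hw =>
          obtain ⟨a, ha, b, hb, rfl⟩ := hw
          have hid : n * ⁅a, b⁆ * n⁻¹ = ⁅n * a, b⁆ * ⁅n, b⁆⁻¹ := by
            simp only [commutatorElement_def]; group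
          rw [hid, ← Subgroup.commutator_def]
          exact Subgroup.mul_mem _
            (Subgroup.commutator_mem_commutator (N.mul_mem hn ha) hb)
            (Subgroup.inv_mem _ (Subgroup.commutator_mem_commutator hn hb))
      | one => simpa using Subgroup.one_mem _
      | mul x y hx hy ihx ihy =>
          have : n * (x * y) * n⁻¹ = (n * x * n⁻¹) * (n * y * n⁻¹) := by group
          rw [this]; exact Subgroup.mul_mem _ ihx ihy
      | inv x hx ihx =>
          have : n * x⁻¹ * n⁻¹ = (n * x * n⁻¹)⁻¹ := by group
          rw [this]; exact Subgroup.inv_mem _ ihx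
    · intro q hq
      apply Subgroup.mem_normalizer_fintype
      intro x hx
      rw [Subgroup.commutator_def] at hx ⊢
      induction hx using Subgroup.closure_induction with
      | mem w hw =>
          obtain ⟨a, ha, b, hb, rfl⟩ := hw
          have hid : q * ⁅a, b⁆ * q⁻¹ = ⁅q * a * q⁻¹, q * b * q⁻¹⁆ := by
            simp only [commutatorElement_def]; group
          rw [hid, ← Subgroup.commutator_def]
          exact Subgroup.commutator_mem_commutator (hNnormal.conj_mem a ha q)
            ((P : Subgroup G).mul_mem ((P : Subgroup G).mul_mem hq hb)
              ((P : Subgroup G).inv_mem hq))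
      | one => simpa using Subgroup.one_mem _
      | mul x y hx hy ihx ihy =>
          have : q * (x * y) * q⁻¹ = (q * x * q⁻¹) * (q * y * q⁻¹) := by group
          rw [this]; exact Subgroup.mul_mem _ ihx ihy
      | inv x hx ihx =>
          have : q * x⁻¹ * q⁻¹ = (q * x * q⁻¹)⁻¹ := by group
          rw [this]; exact Subgroup.inv_mem _ ihx
  apply le_antisymm
  · -- ⁅N, P⁆ ≤ normalClosure S
    set K := Subgroup.normalClosure S with hK_def
    have hKnormal : K.Normal := Subgroup.normalClosure_normal
    set π := QuotientGroup.mk' K with hπ_def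
    have hπsurj : Function.Surjective π := QuotientGroup.mk'_surjective K
    -- image of N
    set N' := N.map π with hN'_def
    have hN'normal : N'.Normal := hNnormal.map π hπsurj
    have hN'p' : ∀ z ∈ N', ¬ p ∣ orderOf z := by
      rintro z ⟨n, hn, rfl⟩ hdvd
      exact hNp' n hn (hdvd.trans (orderOf_map_dvd π n))
    -- each generator commutator is 1 in the quotient
    obtain ⟨m, rfl⟩ : ∃ m, k = m + 1 := ⟨k - 1, (Nat.succ_pred_eq_of_pos hk).symm⟩
    have hcomm_gen : ∀ (i : Fin s) (j : Fin t), Commute (π (g i)) (π (h j)) := by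
      intro i j
      obtain ⟨a, ha⟩ := P.2 ⟨h j, hhP j⟩
      have hha : (h j) ^ p ^ a = 1 := by
        have := congrArg (Subtype.val) ha
        simpa using this
      have hha' : (π (h j)) ^ p ^ a = 1 := by
        rw [← map_pow, hha, map_one]
      have hE : engelComm (π (g i)) (π (h j)) (m + 1) = 1 := by
        rw [← map_engelComm]
        rw [hπ_def]
        exact (QuotientGroup.eq_one_iff _).mpr
          (Subgroup.subset_normalClosure ⟨i, j, rfl⟩)
      have := engel_to_single p hN'normal hN'p' hha' m (π (g i))
        (Subgroup.mem_map_of_mem π (hgN i)) hE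
      exact commutatorElement_eq_one_iff_commute.mp this
    -- extend to all of N against each h j
    have hN_comm : ∀ x ∈ N, ∀ j, Commute (π x) (π (h j)) := by
      intro x hx j
      rw [← hggen] at hx
      induction hx using Subgroup.closure_induction with
      | mem w hw => obtain ⟨i, rfl⟩ := hw; exact hcomm_gen i j
      | one => rw [map_one]; exact Commute.one_left _
      | mul x y hx hy ihx ihy => rw [map_mul]; exact ihx.mul_left ihy
      | inv x hx ihx => rw [map_inv]; exact ihx.inv_left
    -- extend to all of P
    have hNP_comm : ∀ x ∈ N, ∀ b ∈ (P : Subgroup G), Commute (π x) (π b) := by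
      intro x hx b hb
      rw [← hhgen] at hb
      induction hb using Subgroup.closure_induction with
      | mem w hw => obtain ⟨j, rfl⟩ := hw; exact hN_comm x hx j
      | one => rw [map_one]; exact Commute.one_right _
      | mul b c hbb hcc ihb ihc => rw [map_mul]; exact ihb.mul_right ihc
      | inv b hbb ihb => rw [map_inv]; exact ihb.inv_right
    rw [Subgroup.commutator_le]
    intro a ha b hb
    have : π ⁅a, b⁆ = 1 := by
      rw [map_commutatorElement]
      exact commutatorElement_eq_one_iff_commute.mpr (hNP_comm a ha b hb)
    exact (QuotientGroup.eq_one_iff _).mp this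
  · -- normalClosure S ≤ ⁅N, P⁆
    haveI := hComNormal
    apply Subgroup.normalClosure_le_normal
    rintro z ⟨i, j, rfl⟩
    obtain ⟨m, rfl⟩ : ∃ m, k = m + 1 := ⟨k - 1, (Nat.succ_pred_eq_of_pos hk).symm⟩
    exact Subgroup.commutator_mem_commutator (hengel_mem i j m) (hhP j)
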